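/- Orthogonality identity (A) of Appendix A. For all i, j ∈ {2,…,m} with i ≠ j and every θ = (θ_2,…,θ_m) ∈ ℝ^{m−1}, one has ⟨e_j, A_i(θ) e_1⟩ = 0, where ⟨·,·⟩ is the Euclidean inner product on ℝ^m. -/

import Mathlib

open Real

/-- The `m × m` rotation matrix rotating the plane spanned by the basis vectors
with indices `0` and `i` (the paper's `e_1` and `e_{i+1}`) by an angle `a`,
leaving all other directions invariant. -/
noncomputable def rotMat (m : ℕ) (i : ℕ) (a : ℝ) : Matrix (Fin m) (Fin m) ℝ :=
  Matrix.of fun k l =>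
    if (k : ℕ) = 0 ∧ (l : ℕ) = 0 then Real.cos a
    else if (k : ℕ) = 0 ∧ (l : ℕ) = i then -Real.sin a
    else if (k : ℕ) = i ∧ (l : ℕ) = 0 then Real.sin a
    else if (k : ℕ) = i ∧ (l : ℕ) = i then Real.cos a
    else if k = l then 1 else 0

/-- `R_θ = R_2(θ_2) R_3(θ_3) ⋯ R_m(θ_m)`.  Here the paper's basis vector `e_j`
(`j ∈ {1,…,m}`) is the Lean basis vector with index `j - 1 : Fin m`, so the
paper's rotation `R_j(θ_j)` of the `(e_1, e_j)`-plane is `rotMat m (j-1) (θ j)`.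
Only the values `θ 2, …, θ m` of `θ : ℕ → ℝ` are relevant. -/
noncomputable def Rtheta (m : ℕ) (θ : ℕ → ℝ) : Matrix (Fin m) (Fin m) ℝ :=
  ((List.range (m - 1)).map fun k => rotMat m (k + 1) (θ (k + 2))).prod

/-- The entrywise partial derivative `∂R_θ/∂θ_j`. -/
noncomputable def dRtheta (m : ℕ) (θ : ℕ → ℝ) (j : ℕ) : Matrix (Fin m) (Fin m) ℝ :=
  Matrix.of fun k l => deriv (fun a => Rtheta m (Function.update θ j a) k l) (θ j)

/-- `A_j(θ) = R_θ⁻¹ ∂R_θ/∂θ_j`. -/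
noncomputable def Amat (m : ℕ) (θ : ℕ → ℝ) (j : ℕ) : Matrix (Fin m) (Fin m) ℝ :=
  (Rtheta m θ)⁻¹ * dRtheta m θ j

namespace RotAux

noncomputable def pmat (m q : ℕ) (c1 c2 c3 c4 d : ℝ) : Matrix (Fin m) (Fin m) ℝ :=
  Matrix.of fun k l =>
    if (k : ℕ) = 0 ∧ (l : ℕ) = 0 then c1
    else if (k : ℕ) = 0 ∧ (l : ℕ) = q then c2
    else if (k : ℕ) = q ∧ (l : ℕ) = 0 then c3
    else if (k : ℕ) = q ∧ (l : ℕ) = q then c4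
    else if k = l then d else 0

lemma rotMat_eq_pmat (m q : ℕ) (a : ℝ) :
    rotMat m q a = pmat m q (Real.cos a) (-Real.sin a) (Real.sin a) (Real.cos a) 1 := rfl

noncomputable def drot (m q : ℕ) (a : ℝ) : Matrix (Fin m) (Fin m) ℝ :=
  pmat m q (-Real.sin a) (-Real.cos a) (Real.cos a) (-Real.sin a) 0

noncomputable def smat (m q : ℕ) : Matrix (Fin m) (Fin m) ℝ :=
  pmat m q 0 (-1) 1 0 0

set_option maxHeartbeats 1600000 in
lemma pmat_mulVec (m q : ℕ) (hq0 : q ≠ 0) (hqm : q < m) (c1 c2 c3 c4 d : ℝ)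
    (v : Fin m → ℝ) :
    (pmat m q c1 c2 c3 c4 d).mulVec v = fun k : Fin m =>
      if (k : ℕ) = 0 then c1 * v ⟨0, by omega⟩ + c2 * v ⟨q, hqm⟩
      else if (k : ℕ) = q then c3 * v ⟨0, by omega⟩ + c4 * v ⟨q, hqm⟩
      else d * v k := by
  have hm : 0 < m := by omega
  funext k
  simp only [Matrix.mulVec, dotProduct, pmat, Matrix.of_apply]
  by_cases hk0 : (k : ℕ) = 0
  · have hrow : ∀ l : Fin m,
        (if (k : ℕ) = 0 ∧ (l : ℕ) = 0 then c1
          else if (k : ℕ) = 0 ∧ (l : ℕ) = q then c2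
          else if (k : ℕ) = q ∧ (l : ℕ) = 0 then c3
          else if (k : ℕ) = q ∧ (l : ℕ) = q then c4
          else if k = l then d else 0) * v l
        = (if l = (⟨0, hm⟩ : Fin m) then c1 * v l else 0)
          + (if l = (⟨q, hqm⟩ : Fin m) then c2 * v l else 0) := by
      intro l
      simp only [Fin.ext_iff]
      split_ifs <;> first | omega | ring1
    rw [Finset.sum_congr rfl fun l _ => hrow l, Finset.sum_add_distrib,
      Finset.sum_ite_eq', Finset.sum_ite_eq']
    simp [hk0]
  · by_cases hkq : (k : ℕ) = q
    · have hrow : ∀ l : Fin m,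
          (if (k : ℕ) = 0 ∧ (l : ℕ) = 0 then c1
            else if (k : ℕ) = 0 ∧ (l : ℕ) = q then c2
            else if (k : ℕ) = q ∧ (l : ℕ) = 0 then c3
            else if (k : ℕ) = q ∧ (l : ℕ) = q then c4
            else if k = l then d else 0) * v l
          = (if l = (⟨0, hm⟩ : Fin m) then c3 * v l else 0)
            + (if l = (⟨q, hqm⟩ : Fin m) then c4 * v l else 0) := by
        intro l
        simp only [Fin.ext_iff]
        split_ifs <;> first | omega | ring1
      rw [Finset.sum_congr rfl fun l _ => hrow l, Finset.sum_add_distrib,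
        Finset.sum_ite_eq', Finset.sum_ite_eq']
      simp [hk0, hkq, hq0]
    · have hrow : ∀ l : Fin m,
          (if (k : ℕ) = 0 ∧ (l : ℕ) = 0 then c1
            else if (k : ℕ) = 0 ∧ (l : ℕ) = q then c2
            else if (k : ℕ) = q ∧ (l : ℕ) = 0 then c3
            else if (k : ℕ) = q ∧ (l : ℕ) = q then c4
            else if k = l then d else 0) * v l
          = (if l = k then d * v l else 0) := by
        intro l
        simp only [Fin.ext_iff]
        split_ifs <;> first | omega | ring1
      rw [Finset.sum_congr rfl fun l _ => hrow l, Finset.sum_ite_eq']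
      simp [hk0, hkq, hq0]


lemma entry_eq_mulVec (A : Matrix (Fin m) (Fin m) ℝ) (k l : Fin m) :
    A k l = A.mulVec (Pi.single l 1) k := by simp [Matrix.mulVec_single]

set_option maxHeartbeats 1000000 in
lemma pmat_mul (m q : ℕ) (hq0 : q ≠ 0) (hqm : q < m) (c1 c2 c3 c4 d e1 e2 e3 e4 e : ℝ) :
    pmat m q c1 c2 c3 c4 d * pmat m q e1 e2 e3 e4 e
      = pmat m q (c1*e1+c2*e3) (c1*e2+c2*e4) (c3*e1+c4*e3) (c3*e2+c4*e4) (d*e) := by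
  ext k l
  rw [entry_eq_mulVec (pmat m q c1 c2 c3 c4 d * pmat m q e1 e2 e3 e4 e),
    ← Matrix.mulVec_mulVec, pmat_mulVec m q hq0 hqm, pmat_mulVec m q hq0 hqm]
  simp only [pmat, Matrix.of_apply, Pi.single_apply, Fin.ext_iff]
  split_ifs <;> first | omega | ring1

lemma pmat_congr (m q : ℕ) {x1 x2 x3 x4 x5 y1 y2 y3 y4 y5 : ℝ}
    (h1 : x1 = y1) (h2 : x2 = y2) (h3 : x3 = y3) (h4 : x4 = y4) (h5 : x5 = y5) :
    pmat m q x1 x2 x3 x4 x5 = pmat m q y1 y2 y3 y4 y5 := by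
  rw [h1, h2, h3, h4, h5]

lemma pmat_one (m q : ℕ) (hq0 : q ≠ 0) :
    pmat m q 1 0 0 1 1 = (1 : Matrix (Fin m) (Fin m) ℝ) := by
  ext k l
  simp only [pmat, Matrix.of_apply, Matrix.one_apply, Fin.ext_iff]
  split_ifs <;> first | omega | ring1

lemma rot_mul_rot (m q : ℕ) (hq0 : q ≠ 0) (hqm : q < m) (a : ℝ) :
    rotMat m q (-a) * rotMat m q a = 1 := by
  rw [rotMat_eq_pmat, rotMat_eq_pmat, pmat_mul m q hq0 hqm, ← pmat_one m q hq0]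
  have h := Real.sin_sq_add_cos_sq a
  simp only [Real.cos_neg, Real.sin_neg]
  apply pmat_congr <;> nlinarith [h]

lemma rot_mul_rot' (m q : ℕ) (hq0 : q ≠ 0) (hqm : q < m) (a : ℝ) :
    rotMat m q a * rotMat m q (-a) = 1 := by
  have := rot_mul_rot m q hq0 hqm (-a)
  rwa [neg_neg] at this

lemma rot_isUnit (m q : ℕ) (hq0 : q ≠ 0) (hqm : q < m) (a : ℝ) :
    IsUnit (rotMat m q a) :=
  ⟨⟨rotMat m q a, rotMat m q (-a), rot_mul_rot' m q hq0 hqm a,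
    rot_mul_rot m q hq0 hqm a⟩, rfl⟩

lemma rot_inv (m q : ℕ) (hq0 : q ≠ 0) (hqm : q < m) (a : ℝ) :
    (rotMat m q a)⁻¹ = rotMat m q (-a) :=
  Matrix.inv_eq_left_inv (rot_mul_rot m q hq0 hqm a)

lemma rotneg_mul_drot (m q : ℕ) (hq0 : q ≠ 0) (hqm : q < m) (a : ℝ) :
    rotMat m q (-a) * drot m q a = smat m q := by
  rw [rotMat_eq_pmat, drot, pmat_mul m q hq0 hqm, smat]
  have h := Real.sin_sq_add_cos_sq a
  simp only [Real.cos_neg, Real.sin_neg]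
  apply pmat_congr <;> nlinarith [h]

lemma rot_hasDerivAt (m q : ℕ) (k l : Fin m) (a : ℝ) :
    HasDerivAt (fun b => rotMat m q b k l) (drot m q a k l) a := by
  simp only [rotMat, drot, pmat, Matrix.of_apply]
  split_ifs <;>
    first
      | exact Real.hasDerivAt_cos a
      | exact Real.hasDerivAt_sin a
      | exact (Real.hasDerivAt_sin a).neg
      | exact hasDerivAt_const a _

lemma prod_mulVec_fix {m : ℕ} (s : List (Matrix (Fin m) (Fin m) ℝ)) (v : Fin m → ℝ)
    (h : ∀ M ∈ s, M.mulVec v = v) : s.prod.mulVec v = v := by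
  induction s with
  | nil => simp [Matrix.one_mulVec]
  | cons M t ih =>
      rw [List.prod_cons, ← Matrix.mulVec_mulVec, ih (fun N hN => h N (by simp [hN])),
        h M (by simp)]

lemma prod_mulVec_coord {m : ℕ} (s : List (Matrix (Fin m) (Fin m) ℝ)) (x : Fin m)
    (h : ∀ M ∈ s, ∀ w, M.mulVec w x = w x) : ∀ w, s.prod.mulVec w x = w x := by
  induction s with
  | nil => intro w; simp [Matrix.one_mulVec]
  | cons M t ih =>
      intro w
      rw [List.prod_cons, ← Matrix.mulVec_mulVec, h M (by simp),
        ih (fun N hN w' => h N (by simp [hN]) w')]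

lemma rot_mulVec_single_fix (m q : ℕ) (hq0 : q ≠ 0) (hqm : q < m) (a : ℝ)
    (x : Fin m) (hx0 : (x : ℕ) ≠ 0) (hxq : (x : ℕ) ≠ q) :
    (rotMat m q a).mulVec (Pi.single x 1) = Pi.single x 1 := by
  rw [rotMat_eq_pmat, pmat_mulVec m q hq0 hqm]
  funext k
  simp only [Pi.single_apply, Fin.ext_iff]
  split_ifs <;> first | omega | ring1

lemma rot_mulVec_coord (m q : ℕ) (hq0 : q ≠ 0) (hqm : q < m) (a : ℝ)
    (x : Fin m) (hx0 : (x : ℕ) ≠ 0) (hxq : (x : ℕ) ≠ q) (w : Fin m → ℝ) :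
    (rotMat m q a).mulVec w x = w x := by
  rw [rotMat_eq_pmat, pmat_mulVec m q hq0 hqm]
  simp [hx0, hxq]

end RotAux

/-- **Orthogonality identity (A)** of Appendix A: for `i, j ∈ {2,…,m}` with
`i ≠ j`, `⟨e_j, A_i(θ) e_1⟩ = 0`, i.e. the `(j-1)`-th Euclidean coordinate of
`A_i(θ) e_1` vanishes. -/
theorem Amat_e1_coord_ne (m : ℕ) (hm : 2 ≤ m) (θ : ℕ → ℝ)
    (i j : ℕ) (hi2 : 2 ≤ i) (him : i ≤ m) (hj2 : 2 ≤ j) (hjm : j ≤ m) (hij : i ≠ j) :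
    (Amat m θ i).mulVec (Pi.single (⟨0, by omega⟩ : Fin m) 1) ⟨j - 1, by omega⟩ = 0 := by
  classical
  open RotAux in
  obtain ⟨n, rfl⟩ : ∃ n, i = n + 2 := ⟨i - 2, by omega⟩
  obtain ⟨r, hm2⟩ : ∃ r, m = n + 2 + r := ⟨m - (n + 2), by omega⟩
  have hq0 : n + 1 ≠ 0 := by omega
  have hqm : n + 1 < m := by omega
  set Lf : (ℕ → ℝ) → Matrix (Fin m) (Fin m) ℝ :=
    fun ϑ => ((List.range n).map fun k => rotMat m (k + 1) (ϑ (k + 2))).prod with hLf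
  set Pf : (ℕ → ℝ) → Matrix (Fin m) (Fin m) ℝ :=
    fun ϑ => ((List.range r).map fun k => rotMat m (n + 1 + k + 1) (ϑ (n + 1 + k + 2))).prod
    with hPf
  have hsplit : List.range (m - 1)
      = (List.range n ++ [n]) ++ (List.range r).map (fun k => n + 1 + k) := by
    have h1 : m - 1 = (n + 1) + r := by omega
    rw [h1, List.range_add, List.range_succ]
  have hfact : ∀ ϑ : ℕ → ℝ,
      Rtheta m ϑ = Lf ϑ * rotMat m (n + 1) (ϑ (n + 2)) * Pf ϑ := by
    intro ϑ
    show (((List.range (m - 1)).map fun k => rotMat m (k + 1) (ϑ (k + 2))).prod) = _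
    rw [hsplit]
    simp only [List.map_append, List.prod_append, List.map_map, List.map_cons, List.map_nil,
      List.prod_cons, List.prod_nil, Function.comp_def, mul_one, hLf, hPf]
  have hLunit : IsUnit (Lf θ).det := by
    rw [← Matrix.isUnit_iff_isUnit_det]
    apply List.prod_isUnit
    intro M hM
    simp only [hLf, List.mem_map, List.mem_range] at hM
    obtain ⟨k, hk, rfl⟩ := hM
    exact rot_isUnit m (k + 1) (by omega) (by omega) _
  have hPunit : IsUnit (Pf θ).det := by
    rw [← Matrix.isUnit_iff_isUnit_det]
    apply List.prod_isUnit
    intro M hM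
    simp only [hPf, List.mem_map, List.mem_range] at hM
    obtain ⟨k, hk, rfl⟩ := hM
    exact rot_isUnit m (n + 1 + k + 1) (by omega) (by omega) _
  have hup : ∀ b, Rtheta m (Function.update θ (n + 2) b)
      = Lf θ * rotMat m (n + 1) b * Pf θ := by
    intro b
    rw [hfact]
    have h1 : Lf (Function.update θ (n + 2) b) = Lf θ := by
      simp only [hLf]
      congr 1
      apply List.map_congr_left
      intro k hk
      simp only [List.mem_range] at hk
      rw [Function.update_of_ne (by omega)]
    have h2 : Pf (Function.update θ (n + 2) b) = Pf θ := by
      simp only [hPf]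
      congr 1
      apply List.map_congr_left
      intro k hk
      simp only [List.mem_range] at hk
      rw [Function.update_of_ne (by omega)]
    rw [h1, h2, Function.update_self]
  have hdR : dRtheta m θ (n + 2) = Lf θ * drot m (n + 1) (θ (n + 2)) * Pf θ := by
    ext k l
    have hder : HasDerivAt (fun b => Rtheta m (Function.update θ (n + 2) b) k l)
        ((Lf θ * drot m (n + 1) (θ (n + 2)) * Pf θ) k l) (θ (n + 2)) := by
      have hfun : (fun b => Rtheta m (Function.update θ (n + 2) b) k l)
          = fun b => ∑ y, (∑ x, Lf θ k x * rotMat m (n + 1) b x y) * Pf θ y l := by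
        funext b
        rw [hup b]
        simp [Matrix.mul_apply]
      rw [hfun, show (Lf θ * drot m (n + 1) (θ (n + 2)) * Pf θ) k l
          = ∑ y, (∑ x, Lf θ k x * drot m (n + 1) (θ (n + 2)) x y) * Pf θ y l by
            simp [Matrix.mul_apply]]
      exact HasDerivAt.fun_sum fun y _ =>
        (HasDerivAt.fun_sum fun x _ =>
          (rot_hasDerivAt m (n + 1) x y (θ (n + 2))).const_mul _).mul_const _
    simp only [dRtheta, Matrix.of_apply]
    exact hder.deriv
  have hA : Amat m θ (n + 2) = (Pf θ)⁻¹ * smat m (n + 1) * Pf θ := by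
    rw [Amat, hdR, hfact θ, Matrix.mul_inv_rev, Matrix.mul_inv_rev,
      rot_inv m (n + 1) hq0 hqm]
    have hLX : ∀ X : Matrix (Fin m) (Fin m) ℝ, (Lf θ)⁻¹ * (Lf θ * X) = X := by
      intro X
      rw [← Matrix.mul_assoc, Matrix.nonsing_inv_mul _ hLunit, Matrix.one_mul]
    simp only [Matrix.mul_assoc, hLX]
    rw [← Matrix.mul_assoc (rotMat m (n + 1) (-θ (n + 2))),
      rotneg_mul_drot m (n + 1) hq0 hqm]
  rw [hA, ← Matrix.mulVec_mulVec, ← Matrix.mulVec_mulVec]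
  set e0 : Fin m → ℝ := Pi.single (⟨0, by omega⟩ : Fin m) 1 with he0
  set w : Fin m → ℝ := (Pf θ).mulVec e0 with hw
  have hwq : w ⟨n + 1, hqm⟩ = 0 := by
    rw [hw]
    rw [prod_mulVec_coord _ _ ?_ e0]
    · simp only [he0, Pi.single_apply, Fin.mk.injEq]
      rw [if_neg (by omega)]
    · intro M hM w'
      simp only [hPf, List.mem_map, List.mem_range] at hM
      obtain ⟨k, hk, rfl⟩ := hM
      exact rot_mulVec_coord m (n + 1 + k + 1) (by omega) (by omega) _ _
        (by simp) (by simp; omega) w'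
  have hsw : (smat m (n + 1)).mulVec w
      = Pi.single (⟨n + 1, hqm⟩ : Fin m) (w ⟨0, by omega⟩) := by
    rw [smat, pmat_mulVec m (n + 1) hq0 hqm]
    funext k
    rw [show w ⟨n + 1, hqm⟩ = 0 from hwq]
    simp only [Pi.single_apply, Fin.ext_iff]
    split_ifs <;> first | omega | ring1
  rw [hsw]
  have hPfix : (Pf θ).mulVec (Pi.single (⟨n + 1, hqm⟩ : Fin m) 1)
      = Pi.single (⟨n + 1, hqm⟩ : Fin m) 1 := by
    apply prod_mulVec_fix
    intro M hM
    simp only [hPf, List.mem_map, List.mem_range] at hM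
    obtain ⟨k, hk, rfl⟩ := hM
    exact rot_mulVec_single_fix m (n + 1 + k + 1) (by omega) (by omega) _ _
      (by simp) (by simp; omega)
  have hPinv : (Pf θ)⁻¹.mulVec (Pi.single (⟨n + 1, hqm⟩ : Fin m) 1)
      = Pi.single (⟨n + 1, hqm⟩ : Fin m) 1 := by
    conv_lhs => rw [← hPfix]
    rw [Matrix.mulVec_mulVec, Matrix.nonsing_inv_mul _ hPunit, Matrix.one_mulVec]
  have hsingle : Pi.single (⟨n + 1, hqm⟩ : Fin m) (w ⟨0, by omega⟩)
      = (w ⟨0, by omega⟩) • (Pi.single (⟨n + 1, hqm⟩ : Fin m) 1 : Fin m → ℝ) := by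
    funext k
    simp only [Pi.smul_apply, Pi.single_apply, smul_eq_mul]
    split_ifs <;> ring1
  rw [hsingle, Matrix.mulVec_smul, hPinv]
  simp only [Pi.smul_apply, Pi.single_apply, smul_eq_mul, Fin.mk.injEq]
  rw [if_neg (by omega)]
  ring1
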